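/- The minimal elements of the poset of algebraic convex geometries on a set X (ordered by inclusion of their families of closed sets) are exactly the systems Id(X, ≤) of down-sets of total orders ≤ on X. -/

import Mathlib

/-- φ is a closure operator: extensive, monotone, idempotent. -/
def IsClosureOp {X : Type*} (φ : Set X → Set X) : Prop :=
  (∀ A, A ⊆ φ A) ∧ (∀ A B, A ⊆ B → φ A ⊆ φ B) ∧ (∀ A, φ (φ A) = φ A)

/-- φ is algebraic (finitary): the closure of a set is the union of closures of its
finite subsets. -/
def IsAlgebraicOp {X : Type*} (φ : Set X → Set X) : Prop :=
  ∀ A, φ A = ⋃₀ {T | ∃ B, B ⊆ A ∧ B.Finite ∧ T = φ B}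

/-- The anti-exchange property. -/
def AntiExchange {X : Type*} (φ : Set X → Set X) : Prop :=
  ∀ (x y : X) (A : Set X), x ≠ y → φ A = A → x ∉ A →
    x ∈ φ (A ∪ {y}) → y ∉ φ (A ∪ {x})

/-- A convex geometry: a zero-closure operator with the anti-exchange property. -/
def IsConvexGeometry {X : Type*} (φ : Set X → Set X) : Prop :=
  IsClosureOp φ ∧ φ ∅ = ∅ ∧ AntiExchange φ

/-- An algebraic convex geometry. -/
def IsAlgConvexGeometry {X : Type*} (φ : Set X → Set X) : Prop :=
  IsClosureOp φ ∧ IsAlgebraicOp φ ∧ φ ∅ = ∅ ∧ AntiExchange φ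

/-- An algebraic subset of Pow X : closed under arbitrary intersections
(with ⋂₀ ∅ = X) and under unions of nonempty up-directed subfamilies. -/
def IsAlgSubset {X : Type*} (F : Set (Set X)) : Prop :=
  (∀ S ⊆ F, ⋂₀ S ∈ F) ∧
  (∀ S ⊆ F, S.Nonempty → (∀ A ∈ S, ∀ B ∈ S, ∃ C ∈ S, A ∪ B ⊆ C) → ⋃₀ S ∈ F)

/-- A maximal chain in the lattice of φ-closed sets. -/
def IsMaxChainOfClosed {X : Type*} (φ : Set X → Set X) (C : Set (Set X)) : Prop :=
  C ⊆ {Y | φ Y = Y} ∧ IsChain (· ⊆ ·) C ∧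
  ∀ T, φ T = T → (∀ A ∈ C, T ⊆ A ∨ A ⊆ T) → T ∈ C

/-- An algebraic convex geometry on X, identified with its family of closed sets. -/
def IsACGFamily {X : Type*} (F : Set (Set X)) : Prop :=
  ∃ φ : Set X → Set X, IsAlgConvexGeometry φ ∧ F = {Y | φ Y = Y}

section Aux

variable {X : Type*}

/-- The down-sets of a linear order form an algebraic convex geometry. -/
lemma downsets_ACG (r : X → X → Prop) (hlin : IsLinearOrder X r) :
    IsACGFamily {A : Set X | ∀ x y, r x y → y ∈ A → x ∈ A} := by
  haveI := hlin
  refine ⟨fun A => {x | ∃ a ∈ A, r x a}, ⟨⟨?_, ?_, ?_⟩, ?_, ?_, ?_⟩, ?_⟩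
  · exact fun A x hx => ⟨x, hx, refl_of r x⟩
  · rintro A B h x ⟨a, ha, hr⟩; exact ⟨a, h ha, hr⟩
  · intro A
    apply Set.Subset.antisymm
    · rintro x ⟨a, ⟨a', ha', haa'⟩, hxa⟩
      exact ⟨a', ha', trans_of r hxa haa'⟩
    · exact fun x hx => ⟨x, hx, refl_of r x⟩
  · intro A
    ext x
    constructor
    · rintro ⟨a, ha, hr⟩
      exact ⟨{z | ∃ b ∈ ({a} : Set X), r z b}, ⟨{a}, Set.singleton_subset_iff.2 ha,
        Set.finite_singleton a, rfl⟩, ⟨a, rfl, hr⟩⟩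
    · rintro ⟨T, ⟨B, hBA, _, rfl⟩, x, hxB, hr⟩
      exact ⟨x, hBA hxB, hr⟩
  · ext x; simp
  · intro x y A hxy hA hxA hx hy
    obtain ⟨a, ha, hxa⟩ := hx
    have hrxy : r x y := by
      rcases ha with ha | ha
      · exact absurd (hA ▸ ⟨a, ha, hxa⟩ : x ∈ A) hxA
      · rwa [Set.mem_singleton_iff.mp ha] at hxa
    obtain ⟨b, hb, hyb⟩ := hy
    rcases hb with hb | hb
    · have : y ∈ A := hA ▸ ⟨b, hb, hyb⟩
      exact hxA (hA ▸ ⟨y, this, hrxy⟩)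
    · rw [Set.mem_singleton_iff.mp hb] at hyb
      exact hxy (antisymm_of r hrxy hyb)
  · ext A
    constructor
    · intro hA
      apply Set.Subset.antisymm
      · rintro x ⟨a, ha, hr⟩
        exact hA x a hr ha
      · exact fun x hx => ⟨x, hx, refl_of r x⟩
    · intro h x y hr hy
      exact h ▸ ⟨y, hy, hr⟩

/-- Any algebraic convex geometry all of whose closed sets are down-sets of a linear
order has every down-set closed. -/
lemma closed_of_downset {r : X → X → Prop} (hlin : IsLinearOrder X r) {ψ : Set X → Set X}
    (h : IsAlgConvexGeometry ψ) (hsub : ∀ Y, ψ Y = Y → ∀ x y, r x y → y ∈ Y → x ∈ Y)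
    {D : Set X} (hD : ∀ x y, r x y → y ∈ D → x ∈ D) : ψ D = D := by
  haveI := hlin
  obtain ⟨⟨hext, hmono, hidem⟩, halg, hzero, hae⟩ := h
  have key : ∀ (x : X) (B : Set X), B.Finite → (∀ b ∈ B, r b x ∧ b ≠ x) → x ∉ ψ B := by
    intro x B hBfin
    refine Set.Finite.induction_on (motive := fun B _ => (∀ b ∈ B, r b x ∧ b ≠ x) → x ∉ ψ B) B hBfin ?_ ?_
    · intro _
      rw [hzero]
      exact Set.notMem_empty x
    · intro a s _ _ IH hcond hmem
      have hIH : x ∉ ψ s := IH (fun b hb => hcond b (Set.mem_insert_of_mem _ hb))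
      by_cases haB : a ∈ ψ s
      · have hsubs : ψ (insert a s) ⊆ ψ s := by
          have h1 : insert a s ⊆ ψ s := Set.insert_subset haB (hext s)
          exact (hmono _ _ h1).trans (by rw [hidem])
        exact hIH (hsubs hmem)
      · have hax : a ≠ x := (hcond a (Set.mem_insert _ _)).2
        have hrax : r a x := (hcond a (Set.mem_insert _ _)).1
        have hx_in : x ∈ ψ (ψ s ∪ {a}) := by
          refine hmono (insert a s) _ ?_ hmem
          exact Set.insert_subset_iff.2 ⟨Or.inr rfl, (hext s).trans Set.subset_union_left⟩
        have hnae := hae x a (ψ s) (fun h' => hax h'.symm) (hidem s) hIH hx_in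
        have : a ∈ ψ (ψ s ∪ {x}) :=
          hsub _ (hidem _) a x hrax (hext _ (Or.inr rfl))
        exact hnae this
  apply Set.Subset.antisymm _ (hext D)
  intro x hx
  by_contra hxD
  rw [halg D] at hx
  obtain ⟨T, ⟨B, hBD, hBfin, rfl⟩, hxT⟩ := hx
  refine key x B hBfin ?_ hxT
  intro b hb
  have hbD := hBD hb
  have hbx : b ≠ x := fun h' => hxD (h' ▸ hbD)
  have hrbx : r b x := (total_of r b x).resolve_right (fun h' => hxD (hD x b h' hbD))
  exact ⟨hrbx, hbx⟩

/-- Every algebraic convex geometry contains the down-sets of some linear order. -/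
lemma exists_linear {φ : Set X → Set X} (h : IsAlgConvexGeometry φ) :
    ∃ r : X → X → Prop, IsLinearOrder X r ∧
      {A : Set X | ∀ x y, r x y → y ∈ A → x ∈ A} ⊆ {Y | φ Y = Y} := by
  obtain ⟨⟨hext, hmono, hidem⟩, halg, hzero, hae⟩ := h
  -- union of a chain of closed sets is closed
  have hchainU : ∀ S : Set (Set X), (∀ M ∈ S, φ M = M) → IsChain (· ⊆ ·) S →
      φ (⋃₀ S) = ⋃₀ S := by
    intro S hScl hSch
    rcases S.eq_empty_or_nonempty with rfl | hne
    · simpa using hzero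
    refine Set.Subset.antisymm ?_ (hext _)
    intro x hx
    rw [halg] at hx
    obtain ⟨T, ⟨B, hBS, hBfin, rfl⟩, hxT⟩ := hx
    have hfind : ∀ B : Set X, B.Finite → B ⊆ ⋃₀ S → ∃ M ∈ S, B ⊆ M := by
      intro B hBfin
      refine Set.Finite.induction_on (motive := fun B _ => B ⊆ ⋃₀ S → ∃ M ∈ S, B ⊆ M) B hBfin ?_ ?_
      · intro _
        obtain ⟨M, hM⟩ := hne
        exact ⟨M, hM, Set.empty_subset M⟩
      · intro a s _ _ IH hsub
        obtain ⟨M1, hM1, haM1⟩ := hsub (Set.mem_insert a s)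
        obtain ⟨M2, hM2, hsM2⟩ := IH ((Set.subset_insert a s).trans hsub)
        rcases hSch.total hM1 hM2 with h12 | h21
        · exact ⟨M2, hM2, Set.insert_subset (h12 haM1) hsM2⟩
        · exact ⟨M1, hM1, Set.insert_subset haM1 (hsM2.trans h21)⟩
    obtain ⟨M, hMS, hBM⟩ := hfind B hBfin hBS
    have : φ B ⊆ M := (hmono _ _ hBM).trans (by rw [hScl M hMS])
    exact ⟨M, hMS, this hxT⟩
  -- a maximal chain of closed sets
  have hc := maxChain_spec (r := fun a b : {Y : Set X // φ Y = Y} => a.1 ⊆ b.1)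
  set c := maxChain (fun a b : {Y : Set X // φ Y = Y} => a.1 ⊆ b.1) with hcdef
  set C : Set (Set X) := Subtype.val '' c with hCdef
  have hCcl : ∀ M ∈ C, φ M = M := by
    rintro M ⟨p, hp, rfl⟩; exact p.2
  have hCch : IsChain (· ⊆ ·) C := hc.1.image_of_map_rel _ _ Subtype.val (fun _ _ h => h)
  have hCmax : ∀ T, φ T = T → (∀ M ∈ C, T ⊆ M ∨ M ⊆ T) → T ∈ C := by
    intro T hT hcomp
    have hmem : (⟨T, hT⟩ : {Y : Set X // φ Y = Y}) ∈ c := by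
      by_contra hnot
      have hchain' : IsChain (fun a b : {Y : Set X // φ Y = Y} => a.1 ⊆ b.1)
          (insert ⟨T, hT⟩ c) :=
        hc.1.insert (fun b hb _ => hcomp b.1 ⟨b, hb, rfl⟩)
      have := hc.2 hchain' (Set.subset_insert _ _)
      exact hnot (this ▸ Set.mem_insert _ _)
    exact ⟨_, hmem, rfl⟩
  -- the order defined by the chain
  -- closedness of the union piece
  have hAcl : ∀ x : X, φ (⋃₀ {M ∈ C | x ∉ M}) = ⋃₀ {M ∈ C | x ∉ M} := by
    intro x
    exact hchainU _ (fun M hM => hCcl M hM.1) (hCch.mono (Set.sep_subset _ _))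
  have hxA : ∀ x : X, x ∉ ⋃₀ {M ∈ C | x ∉ M} := by
    rintro x ⟨M, hM, hxM⟩
    exact hM.2 hxM
  have htotal : ∀ x y : X, (∀ M ∈ C, y ∈ M → x ∈ M) ∨ (∀ M ∈ C, x ∈ M → y ∈ M) := by
    intro x y
    by_contra hcon
    push_neg at hcon
    obtain ⟨⟨M, hM, hyM, hxM⟩, ⟨N, hN, hxN, hyN⟩⟩ := hcon
    rcases hCch.total hM hN with hMN | hNM
    · exact hyN (hMN hyM)
    · exact hxM (hNM hxN)
  have hanti : ∀ x y : X, (∀ M ∈ C, y ∈ M → x ∈ M) → (∀ M ∈ C, x ∈ M → y ∈ M) → x = y := by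
    intro x y hxy hyx
    by_contra hne
    set A := ⋃₀ {M ∈ C | x ∉ M} with hAdef
    have hiff : ∀ M ∈ C, x ∈ M ↔ y ∈ M := fun M hM => ⟨hyx M hM, hxy M hM⟩
    have hAsub : ∀ M ∈ C, x ∈ M → A ⊆ M := by
      intro M hM hxM
      refine Set.sUnion_subset ?_
      rintro M' ⟨hM', hxM'⟩
      rcases hCch.total hM' hM with h | h
      · exact h
      · exact absurd (h hxM) hxM'
    have hmemC : ∀ z : X, (∀ M ∈ C, (x ∈ M ↔ z ∈ M)) → φ (A ∪ {z}) ∈ C := by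
      intro z hz
      apply hCmax _ (hidem _)
      intro M hM
      by_cases hxM : x ∈ M
      · left
        have hsub : A ∪ {z} ⊆ M :=
          Set.union_subset (hAsub M hM hxM) (Set.singleton_subset_iff.2 ((hz M hM).1 hxM))
        exact (hmono _ _ hsub).trans (by rw [hCcl M hM])
      · right
        have hMA : M ⊆ A := Set.subset_sUnion_of_mem ⟨hM, hxM⟩
        exact hMA.trans (Set.subset_union_left.trans (hext _))
    have hTx := hmemC x (fun M hM => Iff.rfl)
    have hTy := hmemC y hiff
    have hyTx : y ∈ φ (A ∪ {x}) :=
      (hiff _ hTx).1 (hext _ (Or.inr rfl))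
    have hxTy : x ∈ φ (A ∪ {y}) :=
      hxy _ hTy (hext _ (Or.inr rfl))
    exact hae x y A hne (hAcl x) (hxA x) hxTy hyTx
  refine ⟨fun x y => ∀ M ∈ C, y ∈ M → x ∈ M, ?_, ?_⟩
  · letI : IsRefl X (fun x y => ∀ M ∈ C, y ∈ M → x ∈ M) := ⟨fun x M _ h => h⟩
    letI : IsTrans X (fun x y => ∀ M ∈ C, y ∈ M → x ∈ M) :=
      ⟨fun x y z hxy hyz M hM hz => hxy M hM (hyz M hM hz)⟩
    letI : IsAntisymm X (fun x y => ∀ M ∈ C, y ∈ M → x ∈ M) := ⟨hanti⟩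
    letI : IsTotal X (fun x y => ∀ M ∈ C, y ∈ M → x ∈ M) := ⟨htotal⟩
    letI : IsPreorder X (fun x y => ∀ M ∈ C, y ∈ M → x ∈ M) := ⟨⟩
    letI : IsPartialOrder X (fun x y => ∀ M ∈ C, y ∈ M → x ∈ M) := ⟨⟩
    exact ⟨⟩
  · intro D hD
    show φ D = D
    refine Set.Subset.antisymm ?_ (hext D)
    intro x hx
    by_contra hxD
    have hDA : D ⊆ ⋃₀ {M ∈ C | x ∉ M} := by
      intro d hd
      have hne : ¬ ∀ M ∈ C, d ∈ M → x ∈ M := fun hr => hxD (hD x d hr hd)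
      push_neg at hne
      obtain ⟨M, hM, hdM, hxM⟩ := hne
      exact ⟨M, ⟨hM, hxM⟩, hdM⟩
    have : φ D ⊆ ⋃₀ {M ∈ C | x ∉ M} := (hmono _ _ hDA).trans (by rw [hAcl x])
    exact hxA x (this hx)

end Aux

/-- The minimal elements of the poset of algebraic convex geometries on X are
exactly the families of down-sets of total orders on X. -/
theorem stmt15 {X : Type*} (F : Set (Set X)) :
    (IsACGFamily F ∧ ∀ G : Set (Set X), IsACGFamily G → G ⊆ F → G = F) ↔
      ∃ r : X → X → Prop, IsLinearOrder X r ∧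
        F = {A : Set X | ∀ x y, r x y → y ∈ A → x ∈ A} := by
  constructor
  · rintro ⟨⟨φ, hφ, rfl⟩, hmin⟩
    obtain ⟨r, hlin, hsub⟩ := exists_linear hφ
    exact ⟨r, hlin, (hmin _ (downsets_ACG r hlin) hsub).symm⟩
  · rintro ⟨r, hlin, rfl⟩
    refine ⟨downsets_ACG r hlin, ?_⟩
    rintro G ⟨ψ, hψ, rfl⟩ hGF
    apply Set.Subset.antisymm hGF
    intro D hD
    exact closed_of_downset hlin hψ (fun Y hY => hGF hY) hD
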